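/- Let G be a finite soluble group whose order is divisible only by primes ≤ m, with Sylow basis P₁,…,P_k and system normalizer T = ∩ᵢ N_G(Pᵢ). Suppose |x^G| ≤ m for every x ∈ X(G). Then |[x,a]^G| ≤ m^k for all x ∈ G and a ∈ T. -/

import Mathlib

open Pointwise

/-- `Xset G` is the set of commutators `[x,y] = x⁻¹y⁻¹xy` such that `x` and `[x,y]`
both lie in some Sylow subgroup `P` of `G`, `y` arbitrary. -/
def Xset (G : Type*) [Group G] : Set G :=
  {z | ∃ (p : ℕ) (_ : Fact p.Prime) (P : Sylow p G) (x y : G),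
    z = x⁻¹ * y⁻¹ * x * y ∧ x ∈ (P : Subgroup G) ∧ z ∈ (P : Subgroup G)}

section Aux
variable {G : Type*} [Group G]

/-- Conjugate elements have conjugacy classes of the same size. -/
lemma classCard_congr {g g' : G} (h : IsConj g g') :
    Nat.card {h' : G // IsConj g h'} = Nat.card {h' : G // IsConj g' h'} :=
  Nat.card_congr (Equiv.subtypeEquivRight fun t => ⟨fun ht => h.symm.trans ht, fun ht => h.trans ht⟩)

lemma classCard_mul_le [Finite G] (g₁ g₂ : G) :
    Nat.card {h : G // IsConj (g₁ * g₂) h} ≤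
      Nat.card {h : G // IsConj g₁ h} * Nat.card {h : G // IsConj g₂ h} := by
  have hsub : {h : G | IsConj (g₁ * g₂) h} ⊆ {h : G | IsConj g₁ h} * {h : G | IsConj g₂ h} := by
    rintro t ht
    obtain ⟨c, hc⟩ := isConj_iff.mp ht
    exact ⟨c * g₁ * c⁻¹, isConj_iff.mpr ⟨c, rfl⟩, c * g₂ * c⁻¹, isConj_iff.mpr ⟨c, rfl⟩,
      by rw [← hc]; group⟩
  calc Nat.card {h : G | IsConj (g₁ * g₂) h}
      ≤ Nat.card ({h : G | IsConj g₁ h} * {h : G | IsConj g₂ h} : Set G) :=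
        Nat.card_mono (Set.toFinite _) hsub
    _ ≤ _ := Set.natCard_mul_le

lemma classCard_one_le [Finite G] : Nat.card {h : G // IsConj (1 : G) h} ≤ 1 := by
  have : Subsingleton {h : G // IsConj (1 : G) h} := by
    constructor
    rintro ⟨a, ha⟩ ⟨b, hb⟩
    obtain ⟨c, hc⟩ := isConj_iff.mp ha
    obtain ⟨d, hd⟩ := isConj_iff.mp hb
    simp only [mul_one, mul_inv_cancel] at hc hd
    simp [← hc, ← hd]
  exact Finite.card_le_one_iff_subsingleton.mpr this

/-- If `↑H * ↑K = ↑K * ↑H` then the carrier of `H ⊔ K` is `↑H * ↑K`. -/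
lemma coe_sup_of_mul_comm (H K : Subgroup G)
    (hc : (H : Set G) * (K : Set G) = (K : Set G) * (H : Set G)) :
    ((H ⊔ K : Subgroup G) : Set G) = (H : Set G) * (K : Set G) := by
  let L : Subgroup G :=
    { carrier := (H : Set G) * (K : Set G)
      one_mem' := ⟨1, H.one_mem, 1, K.one_mem, one_mul 1⟩
      mul_mem' := by
        rintro x y ⟨h₁, hh₁, k₁, hk₁, rfl⟩ ⟨h₂, hh₂, k₂, hk₂, rfl⟩
        have : k₁ * h₂ ∈ (K : Set G) * (H : Set G) := ⟨k₁, hk₁, h₂, hh₂, rfl⟩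
        rw [← hc] at this
        obtain ⟨h₃, hh₃, k₃, hk₃, heq⟩ := this
        refine ⟨h₁ * h₃, H.mul_mem hh₁ hh₃, k₃ * k₂, K.mul_mem hk₃ hk₂, ?_⟩
        show h₁ * h₃ * (k₃ * k₂) = h₁ * k₁ * (h₂ * k₂)
        rw [show h₁ * h₃ * (k₃ * k₂) = h₁ * (h₃ * k₃) * k₂ by group,
          show (h₃ * k₃ : G) = k₁ * h₂ from heq]
        group
      inv_mem' := by
        rintro x ⟨h, hh, kk, hk, rfl⟩
        have : kk⁻¹ * h⁻¹ ∈ (K : Set G) * (H : Set G) := ⟨kk⁻¹, K.inv_mem hk, h⁻¹, H.inv_mem hh, rfl⟩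
        rw [← hc] at this
        obtain ⟨h₃, hh₃, k₃, hk₃, heq⟩ := this
        refine ⟨h₃, hh₃, k₃, hk₃, ?_⟩
        show h₃ * k₃ = (h * kk)⁻¹
        rw [show (h₃ * k₃ : G) = kk⁻¹ * h⁻¹ from heq]; group }
  apply le_antisymm
  · have : H ⊔ K ≤ L := sup_le
      (fun h hh => ⟨h, hh, 1, K.one_mem, mul_one h⟩)
      (fun kk hk => ⟨1, H.one_mem, kk, hk, one_mul kk⟩)
    exact this
  · rintro x ⟨h, hh, kk, hk, rfl⟩
    exact Subgroup.mul_mem_sup hh hk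

lemma card_set_mul_of_disjoint [Finite G] (H K : Subgroup G) (hd : Disjoint H K) :
    Nat.card ((H : Set G) * (K : Set G) : Set G) = Nat.card H * Nat.card K := by
  rw [← Nat.card_prod]
  apply (Nat.card_congr (Equiv.ofBijective
    (fun p : H × K => (⟨(p.1 : G) * p.2, Set.mul_mem_mul p.1.2 p.2.2⟩ :
      ((H : Set G) * (K : Set G) : Set G))) ⟨?_, ?_⟩)).symm
  · intro p q hpq
    exact Subgroup.mul_injective_of_disjoint hd (congrArg Subtype.val hpq)
  · rintro ⟨x, h, hh, kk, hk, rfl⟩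
    exact ⟨(⟨h, hh⟩, ⟨kk, hk⟩), rfl⟩

end Aux

/-- Let `G` be a finite soluble group whose order has only prime divisors `≤ m`, with
Sylow basis `P₁, …, P_k` and system normalizer `T = ⋂ᵢ N_G(Pᵢ)`. If `|x^G| ≤ m` for
all `x ∈ Xset G`, then `|[x,a]^G| ≤ m^k` for all `x ∈ G`, `a ∈ T`. -/
theorem class_of_commutator_with_systemNormalizer_bounded
    (G : Type*) [Group G] [Finite G] [Group.IsSolvable G] (m k : ℕ) (hm : 0 < m)
    (hπ : ∀ p : ℕ, p.Prime → p ∣ Nat.card G → p ≤ m)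
    (ps : Fin k → ℕ) (hps : ∀ i, (ps i).Prime) (hinj : Function.Injective ps)
    (hall : ∀ p : ℕ, p.Prime → p ∣ Nat.card G → ∃ i, ps i = p)
    (P : ∀ i : Fin k, Sylow (ps i) G)
    (hperm : ∀ i j, ((P i : Subgroup G) : Set G) * ((P j : Subgroup G) : Set G) =
      ((P j : Subgroup G) : Set G) * ((P i : Subgroup G) : Set G))
    (hX : ∀ x ∈ Xset G, Nat.card {h : G // IsConj x h} ≤ m) :
    ∀ x : G, ∀ a ∈ ⨅ i, Subgroup.normalizer ((P i : Subgroup G) : Set G),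
      Nat.card {h : G // IsConj (x⁻¹ * a⁻¹ * x * a) h} ≤ m ^ k := by
  classical
  set n := Nat.card G with hn
  have hn0 : n ≠ 0 := Nat.card_pos.ne'
  -- notation for the product of a list of Sylow subgroups
  set SL : List (Fin k) → Set G := fun l => (l.map (fun i => ((P i : Subgroup G) : Set G))).prod
    with hSL
  have hSLnil : SL [] = (1 : Set G) := rfl
  have hSLcons : ∀ i l, SL (i :: l) = ((P i : Subgroup G) : Set G) * SL l := fun i l => by
    simp [hSL, List.map_cons, List.prod_cons]
  -- Sylow subgroup cards
  have hcardP : ∀ i, Nat.card ((P i : Subgroup G)) = ps i ^ n.factorization (ps i) := fun i =>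
    @Sylow.card_eq_multiplicity G _ _ (ps i) ⟨hps i⟩ (P i)
  -- each P i permutes with SL l
  have permS : ∀ (i : Fin k) (l : List (Fin k)),
      ((P i : Subgroup G) : Set G) * SL l = SL l * ((P i : Subgroup G) : Set G) := by
    intro i l
    induction l with
    | nil => rw [hSLnil, mul_one, one_mul]
    | cons j l ih =>
      rw [hSLcons, ← mul_assoc, hperm i j, mul_assoc, ih, ← mul_assoc]
  -- the product of the Sylow basis along a nodup list is a subgroup of the right card
  have claim : ∀ l : List (Fin k), l.Nodup →
      ∃ H : Subgroup G, (H : Set G) = SL l ∧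
        (∀ q : ℕ, q.Prime → q ∣ Nat.card H → ∃ j ∈ l, ps j = q) ∧
        Nat.card H = (l.map fun j => Nat.card ((P j : Subgroup G))).prod := by
    intro l hl
    induction l with
    | nil =>
      refine ⟨⊥, ?_, ?_, by simp⟩
      · rw [hSLnil, Subgroup.coe_bot]
        ext z; simp [Set.mem_one]
      · intro q hq hdvd
        rw [Subgroup.card_bot] at hdvd
        exact absurd (Nat.eq_one_of_dvd_one hdvd) hq.ne_one
    | cons i l ih =>
      obtain ⟨hil, hlnd⟩ := List.nodup_cons.mp hl
      obtain ⟨H, hHcoe, hHdvd, hHcard⟩ := ih hlnd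
      have hc : ((P i : Subgroup G) : Set G) * (H : Set G) = (H : Set G) * ((P i : Subgroup G) : Set G) := by
        rw [hHcoe]; exact permS i l
      have hcop : Nat.Coprime (Nat.card ((P i : Subgroup G))) (Nat.card H) := by
        rw [hcardP i]
        apply Nat.Coprime.pow_left
        rw [(hps i).coprime_iff_not_dvd]
        intro hdvd
        obtain ⟨j, hj, hji⟩ := hHdvd (ps i) (hps i) hdvd
        exact hil (hinj hji ▸ hj)
      have hdis : Disjoint ((P i : Subgroup G)) H :=
        disjoint_iff.mpr (Subgroup.inf_eq_bot_of_coprime hcop)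
      refine ⟨(P i : Subgroup G) ⊔ H, ?_, ?_, ?_⟩
      · rw [coe_sup_of_mul_comm _ _ hc, hHcoe, hSLcons]
      · intro q hq hdvd
        have hcard : Nat.card ((P i : Subgroup G) ⊔ H : Subgroup G) =
            Nat.card ((P i : Subgroup G)) * Nat.card H := by
          have := card_set_mul_of_disjoint ((P i : Subgroup G)) H hdis
          rw [← coe_sup_of_mul_comm _ _ hc] at this
          rw [← this]; rfl
        rw [hcard] at hdvd
        rcases (Nat.Prime.dvd_mul hq).mp hdvd with h | h
        · rw [hcardP i] at h
          have := (Nat.prime_dvd_prime_iff_eq hq (hps i)).mp (hq.dvd_of_dvd_pow h)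
          exact ⟨i, List.mem_cons_self, this.symm⟩
        · obtain ⟨j, hj, hji⟩ := hHdvd q hq h
          exact ⟨j, List.mem_cons_of_mem i hj, hji⟩
      · have hcard : Nat.card ((P i : Subgroup G) ⊔ H : Subgroup G) =
            Nat.card ((P i : Subgroup G)) * Nat.card H := by
          have := card_set_mul_of_disjoint ((P i : Subgroup G)) H hdis
          rw [← coe_sup_of_mul_comm _ _ hc] at this
          rw [← this]; rfl
        rw [hcard, hHcard, List.map_cons, List.prod_cons]
  -- total product of Sylow cards is |G|
  have hprod : ((List.finRange k).map fun j => Nat.card ((P j : Subgroup G))).prod = n := by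
    have h1 : ((List.finRange k).map fun j => Nat.card ((P j : Subgroup G))).prod =
        ∏ i : Fin k, ps i ^ n.factorization (ps i) := by
      rw [Fin.prod_univ_def]
      congr 1
      exact List.map_congr_left fun i _ => hcardP i
    rw [h1]
    have h2 : ∏ i : Fin k, ps i ^ n.factorization (ps i) =
        ∏ p ∈ Finset.image ps Finset.univ, p ^ n.factorization p :=
      (Finset.prod_image (f := fun p => p ^ n.factorization p) (g := ps)
        (fun a _ b _ h => hinj h)).symm
    rw [h2]
    have hsub : n.primeFactors ⊆ Finset.image ps Finset.univ := by
      intro p hp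
      obtain ⟨i, rfl⟩ := hall p (Nat.prime_of_mem_primeFactors hp) (Nat.dvd_of_mem_primeFactors hp)
      exact Finset.mem_image_of_mem ps (Finset.mem_univ i)
    rw [← Finset.prod_subset hsub (fun p hpim hp => by
      obtain ⟨i, _, rfl⟩ := Finset.mem_image.mp hpim
      have hnd : ¬ ps i ∣ n := fun hd => hp (Nat.mem_primeFactors.mpr ⟨hps i, hd, hn0⟩)
      rw [Nat.factorization_eq_zero_of_not_dvd hnd, pow_zero])]
    · rw [← Nat.prod_factorization_eq_prod_primeFactors]
      exact Nat.factorization_prod_pow_eq_self hn0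
  -- hence the full product covers G
  have cover : ∀ x : G, x ∈ SL (List.finRange k) := by
    obtain ⟨H, hHcoe, _, hHcard⟩ := claim (List.finRange k) (List.nodup_finRange k)
    have : H = ⊤ := Subgroup.eq_top_of_card_eq H (by rw [hHcard, hprod])
    intro x
    rw [← hHcoe, this]
    exact Subgroup.mem_top x
  -- main argument
  intro x a ha
  have haN : ∀ i, a ∈ Subgroup.normalizer ((P i : Subgroup G) : Set G) := fun i => by
    have := Subgroup.mem_iInf.mp ha; exact this i
  have key : ∀ l : List (Fin k), ∀ x ∈ SL l,
      Nat.card {h : G // IsConj (x⁻¹ * a⁻¹ * x * a) h} ≤ m ^ l.length := by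
    intro l
    induction l with
    | nil =>
      intro x hx
      rw [hSLnil, Set.mem_one] at hx
      subst hx
      have h1 : (1 : G)⁻¹ * a⁻¹ * 1 * a = 1 := by group
      rw [h1, List.length_nil, pow_zero]
      exact classCard_one_le
    | cons i l ih =>
      rintro x hx
      rw [hSLcons] at hx
      obtain ⟨u, hu, v, hv, rfl⟩ := hx
      have hfac : (u * v)⁻¹ * a⁻¹ * (u * v) * a =
          (v⁻¹ * (u⁻¹ * a⁻¹ * u * a) * v) * (v⁻¹ * a⁻¹ * v * a) := by group
      rw [hfac]
      calc Nat.card {h : G // IsConj ((v⁻¹ * (u⁻¹ * a⁻¹ * u * a) * v) * (v⁻¹ * a⁻¹ * v * a)) h}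
          ≤ Nat.card {h : G // IsConj (v⁻¹ * (u⁻¹ * a⁻¹ * u * a) * v) h} *
            Nat.card {h : G // IsConj (v⁻¹ * a⁻¹ * v * a) h} := classCard_mul_le _ _
        _ ≤ m * m ^ l.length := by
            apply Nat.mul_le_mul
            · rw [← classCard_congr (isConj_iff.mpr ⟨v⁻¹, by group⟩ :
                IsConj (u⁻¹ * a⁻¹ * u * a) (v⁻¹ * (u⁻¹ * a⁻¹ * u * a) * v))]
              apply hX
              refine ⟨ps i, ⟨hps i⟩, P i, u, a, rfl, hu, ?_⟩
              have hconj : a⁻¹ * u * a ∈ (P i : Subgroup G) := by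
                have h2 := (Subgroup.mem_normalizer_iff.mp ((Subgroup.normalizer ((P i : Subgroup G) : Set G)).inv_mem (haN i) : a⁻¹ ∈ _) u).mp hu
                simpa [mul_assoc] using h2
              have : u⁻¹ * a⁻¹ * u * a = u⁻¹ * (a⁻¹ * u * a) := by group
              rw [this]
              exact Subgroup.mul_mem _ (Subgroup.inv_mem _ hu) hconj
            · exact ih v hv
        _ = m ^ (i :: l).length := by rw [List.length_cons, pow_succ, mul_comm]
  have := key (List.finRange k) x (cover x)
  rwa [List.length_finRange] at this
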